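/- Let E be a real locally convex topological vector space with dual E*, and T : E ⇉ E* a monotone operator. Then the map Γ_T : E ⇉ E defined by Γ_T(y) = {x ∈ E : ⟨y*, y − x⟩ ≥ 0 for all y* ∈ T(y)} is a KKM map: for every finite subset {y_1,…,y_n} ⊆ D(T) and every convex combination x_0 = Σ λ_i y_i, there exists i with x_0 ∈ Γ_T(y_i). -/

import Mathlib

/-- If `T : E ⇉ E*` is monotone, then the map `Γ_T(y) = {x : ⟨y*, y - x⟩ ≥ 0, ∀ y* ∈ T y}`
is a KKM map: every convex combination `x₀` of points `y₁, …, yₙ` of `D(T)` belongs to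
some `Γ_T(yᵢ)`. -/
theorem monotone_implies_gammaT_kkm {E : Type*} [AddCommGroup E] [Module ℝ E]
    [TopologicalSpace E] [IsTopologicalAddGroup E] [ContinuousSMul ℝ E]
    [LocallyConvexSpace ℝ E]
    (T : E → Set (E →L[ℝ] ℝ))
    (hT : ∀ x y (x' y' : E →L[ℝ] ℝ), x' ∈ T x → y' ∈ T y → 0 ≤ (y' - x') (y - x)) :
    ∀ (n : ℕ), 0 < n → ∀ (y : Fin n → E), (∀ i, (T (y i)).Nonempty) →
      ∀ (l : Fin n → ℝ), (∀ i, 0 ≤ l i) → (∑ i, l i) = 1 →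
        ∀ (x₀ : E), x₀ = ∑ i, l i • y i →
          ∃ i, ∀ y' ∈ T (y i), 0 ≤ y' (y i - x₀) := by
  intro n hn y hTy l hl hsum x₀ hx₀
  by_contra h
  push_neg at h
  choose f hf hneg using h
  -- key decomposition
  have key : ∀ i, f i (y i - x₀) = ∑ j, l j * f i (y i - y j) := by
    intro i
    have hv : y i - x₀ = ∑ j, l j • (y i - y j) := by
      have : ∑ j, l j • (y i - y j) = (∑ j, l j) • y i - ∑ j, l j • y j := by
        simp [smul_sub, Finset.sum_sub_distrib, Finset.sum_smul]
      rw [this, hsum, one_smul, hx₀]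
    rw [hv, map_sum]
    simp [map_smul]
  set S : ℝ := ∑ i, l i * f i (y i - x₀) with hS
  have hSnonneg : 0 ≤ S := by
    have h2 : S + S = ∑ i, ∑ j, l i * l j * ((f i - f j) (y i - y j)) := by
      have hSdouble : S = ∑ i, ∑ j, l i * (l j * f i (y i - y j)) := by
        rw [hS]
        refine Finset.sum_congr rfl fun i _ => ?_
        rw [key i, Finset.mul_sum]
      have hSswap : S = ∑ i, ∑ j, l j * (l i * f j (y j - y i)) := by
        rw [hSdouble]; exact Finset.sum_comm ..
      calc S + S = (∑ i, ∑ j, l i * (l j * f i (y i - y j)))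
            + ∑ i, ∑ j, l j * (l i * f j (y j - y i)) := by
              rw [← hSdouble, ← hSswap]
        _ = ∑ i, ∑ j, (l i * (l j * f i (y i - y j)) + l j * (l i * f j (y j - y i))) := by
              rw [← Finset.sum_add_distrib]
              refine Finset.sum_congr rfl fun i _ => ?_
              rw [← Finset.sum_add_distrib]
        _ = ∑ i, ∑ j, l i * l j * ((f i - f j) (y i - y j)) := by
              refine Finset.sum_congr rfl fun i _ => Finset.sum_congr rfl fun j _ => ?_
              have : (f i - f j) (y i - y j) = f i (y i - y j) - f j (y i - y j) := rfl
              rw [this]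
              have h2 : f j (y j - y i) = - f j (y i - y j) := by
                rw [← map_neg]; congr 1; abel
              rw [h2]; ring
    have hnn : 0 ≤ S + S := by
      rw [h2]
      refine Finset.sum_nonneg fun i _ => Finset.sum_nonneg fun j _ => ?_
      exact mul_nonneg (mul_nonneg (hl i) (hl j)) (hT (y j) (y i) (f j) (f i) (hf j) (hf i))
    linarith
  -- S < 0
  have hex : ∃ i, 0 < l i := by
    by_contra hc
    push_neg at hc
    have : (∑ i, l i) = 0 := Finset.sum_eq_zero fun i _ => le_antisymm (hc i) (hl i)
    rw [hsum] at this; norm_num at this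
  obtain ⟨i₀, hi₀⟩ := hex
  have hSneg : S < 0 := by
    rw [hS]
    have : ∑ i, l i * f i (y i - x₀) < ∑ _i : Fin n, (0 : ℝ) := by
      refine Finset.sum_lt_sum (fun i _ => ?_) ⟨i₀, Finset.mem_univ i₀, ?_⟩
      · exact mul_nonpos_of_nonneg_of_nonpos (hl i) (le_of_lt (hneg i))
      · exact mul_neg_of_pos_of_neg hi₀ (hneg i₀)
    simpa using this
  linarith
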